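/- Let H(y) be a matrix polynomial with values (for each real y) in real symmetric n×n matrices, and C(y) the companion matrix of a monic polynomial p(x,y) = x^n + p₁(y)x^{n−1} + ⋯ + pₙ(y). Suppose H(y)C(y) = C(y)^T H(y) for all y, and H(y) = Q(y)^* Q(y) with Q(y) invertible for a given real y. Then M(y) := Q(y)C(y)Q(y)^{-1} is Hermitian and det(xI − M(y)) = p(x,y). -/

import Mathlib

open Matrix

open Polynomial

lemma charpoly_conj_aux {n : ℕ} (Q A : Matrix (Fin n) (Fin n) ℂ) (hQ : IsUnit Q.det) :
    (Q * A * Q⁻¹).charpoly = A.charpoly := by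
  have hQ' : IsUnit ((Q.map (C : ℂ →+* ℂ[X])).det) := by
    rw [← RingHom.mapMatrix_apply, ← RingHom.map_det]
    exact hQ.map C
  have key : charmatrix (Q * A * Q⁻¹) * Q.map (C : ℂ →+* ℂ[X])
      = Q.map (C : ℂ →+* ℂ[X]) * charmatrix A := by
    unfold charmatrix
    rw [sub_mul, mul_sub]
    congr 1
    · exact (Matrix.scalar_commute (X : ℂ[X]) (fun r' => Commute.all _ _) _).eq
    · simp only [RingHom.mapMatrix_apply, ← Matrix.map_mul]
      congr 1
      rw [Matrix.mul_assoc, Matrix.nonsing_inv_mul _ hQ, Matrix.mul_one]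
  have := congrArg Matrix.det key
  rw [Matrix.det_mul, Matrix.det_mul] at this
  unfold Matrix.charpoly
  rw [mul_comm] at this
  exact hQ'.mul_left_cancel this

lemma companion_charpoly (n : ℕ) (c : ℕ → ℝ) :
    (Matrix.of fun i j : Fin n =>
        (if (i : ℕ) = (j : ℕ) + 1 then (1 : ℂ) else 0) +
        (if (j : ℕ) = n - 1 then -((c (n - (i : ℕ)) : ℝ) : ℂ) else 0)).charpoly =
      X ^ n + ∑ j ∈ Finset.Icc 1 n, C ((c j : ℂ)) * X ^ (n - j) := by
  rcases Nat.eq_zero_or_pos n with hn | hn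
  · subst hn
    simp [Matrix.charpoly, Matrix.det_fin_zero]
  set p : ℂ[X] := X ^ n + ∑ j ∈ Finset.Icc 1 n, C ((c j : ℂ)) * X ^ (n - j) with hp
  have hqdeg : (∑ j ∈ Finset.Icc 1 n, C ((c j : ℂ)) * X ^ (n - j)).degree < ((n : ℕ) : WithBot ℕ) := by
    refine lt_of_le_of_lt (Polynomial.degree_sum_le _ _) ?_
    rw [Finset.sup_lt_iff (by exact_mod_cast WithBot.bot_lt_coe n)]
    intro j hj
    refine lt_of_le_of_lt (Polynomial.degree_C_mul_X_pow_le _ _) ?_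
    simp only [Finset.mem_Icc] at hj
    exact_mod_cast Nat.sub_lt_of_pos_le hj.1 hj.2
  have hdegXn : (X ^ n : ℂ[X]).degree = (n : ℕ) := Polynomial.degree_X_pow n
  have hm : p.Monic := by
    rw [hp]
    exact (Polynomial.monic_X_pow n).add_of_left (hdegXn ▸ hqdeg)
  have hpdeg : p.degree = (n : ℕ) := by
    rw [hp, Polynomial.degree_add_eq_left_of_degree_lt (hdegXn ▸ hqdeg), hdegXn]
  have hnd : p.natDegree = n := Polynomial.natDegree_eq_of_degree_eq_some hpdeg
  set pb := AdjoinRoot.powerBasis' hm with hpb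
  have hdim : pb.dim = n := hnd
  have hcp : (Algebra.leftMulMatrix pb.basis pb.gen).charpoly = p := by
    rw [charpoly_leftMulMatrix pb]
    have := AdjoinRoot.minpoly_root (f := p) hm.ne_zero
    rw [hpb]
    simp only [AdjoinRoot.powerBasis'_gen]
    rw [this, hm.leadingCoeff, inv_one, Polynomial.C_1, mul_one]
  have hXmod : ∀ i j : Fin n, ((X : ℂ[X]) ^ ((j : ℕ) + 1) %ₘ p).coeff (i : ℕ) =
      (if (i : ℕ) = (j : ℕ) + 1 then (1 : ℂ) else 0) +
      (if (j : ℕ) = n - 1 then -((c (n - (i : ℕ)) : ℝ) : ℂ) else 0) := by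
    intro i j
    rcases eq_or_ne ((j : ℕ)) (n - 1) with hj | hj
    · have hj1 : (j : ℕ) + 1 = n := by omega
      have hin : (i : ℕ) ≠ n := by omega
      rw [hj1, if_neg hin, if_pos hj, zero_add]
      have hXn : (X : ℂ[X]) ^ n =
          p + -(∑ j ∈ Finset.Icc 1 n, C ((c j : ℂ)) * X ^ (n - j)) := by
        rw [hp]; ring
      rw [hXn, Polynomial.add_modByMonic, show p %ₘ p = 0 by simpa using Polynomial.mul_self_modByMonic (p := 1) hm, zero_add,
        (Polynomial.modByMonic_eq_self_iff hm).2 (by rw [Polynomial.degree_neg, hpdeg]; exact hqdeg)]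
      rw [Polynomial.coeff_neg, Polynomial.finset_sum_coeff]
      simp only [Polynomial.coeff_C_mul, Polynomial.coeff_X_pow]
      rw [Finset.sum_eq_single (n - (i : ℕ))]
      · rw [if_pos (by omega), mul_one]
      · intro k hk hkne
        simp only [Finset.mem_Icc] at hk
        rw [if_neg (by omega), mul_zero]
      · intro h
        exact absurd (Finset.mem_Icc.2 (by omega)) h
    · have hj1 : (j : ℕ) + 1 < n := by omega
      rw [(Polynomial.modByMonic_eq_self_iff hm).2
        (by rw [Polynomial.degree_X_pow, hpdeg]; exact_mod_cast hj1)]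
      rw [Polynomial.coeff_X_pow, if_neg hj, add_zero]
  have hmat : (Matrix.of fun i j : Fin n =>
        (if (i : ℕ) = (j : ℕ) + 1 then (1 : ℂ) else 0) +
        (if (j : ℕ) = n - 1 then -((c (n - (i : ℕ)) : ℝ) : ℂ) else 0)) =
      Matrix.reindex (finCongr hdim) (finCongr hdim) (Algebra.leftMulMatrix pb.basis pb.gen) := by
    ext i j
    have hb : pb.gen * pb.basis ((finCongr hdim).symm j) =
        AdjoinRoot.mk p (X ^ (((finCongr hdim).symm j : ℕ) + 1)) := by
      rw [pb.basis_eq_pow, ← pow_succ']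
      simp only [hpb, AdjoinRoot.powerBasis'_gen]
      rw [map_pow, AdjoinRoot.mk_X]
    rw [Matrix.reindex_apply, Matrix.submatrix_apply, Algebra.leftMulMatrix_eq_repr_mul, hb]
    erw [AdjoinRoot.powerBasisAux'_repr_apply_to_fun, AdjoinRoot.modByMonicHom_mk]
    simpa using (hXmod i j).symm
  rw [hmat, Matrix.charpoly_reindex, hcp, hp]

/-- If the real symmetric matrix `H` intertwines the companion matrix `C` of a
monic polynomial (`H C = Cᵀ H`) and `H = Qᴴ Q` with `Q` invertible, then
`M = Q C Q⁻¹` is Hermitian and `det(xI - M)` is the monic polynomial. -/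
theorem companion_conjugate_hermitian (n : ℕ) (c : ℕ → ℝ)
    (H Q : Matrix (Fin n) (Fin n) ℂ)
    (hHreal : ∀ i j, (H i j).im = 0) (hHsymm : Hᵀ = H)
    (hHQ : H = Qᴴ * Q) (hQ : IsUnit Q.det)
    (hint : H * (Matrix.of fun i j : Fin n =>
        (if (i : ℕ) = (j : ℕ) + 1 then (1 : ℂ) else 0) +
        (if (j : ℕ) = n - 1 then -((c (n - (i : ℕ)) : ℝ) : ℂ) else 0)) =
      (Matrix.of fun i j : Fin n =>
        (if (i : ℕ) = (j : ℕ) + 1 then (1 : ℂ) else 0) +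
        (if (j : ℕ) = n - 1 then -((c (n - (i : ℕ)) : ℝ) : ℂ) else 0))ᵀ * H) :
    (Q * (Matrix.of fun i j : Fin n =>
        (if (i : ℕ) = (j : ℕ) + 1 then (1 : ℂ) else 0) +
        (if (j : ℕ) = n - 1 then -((c (n - (i : ℕ)) : ℝ) : ℂ) else 0)) * Q⁻¹).IsHermitian ∧
    (Q * (Matrix.of fun i j : Fin n =>
        (if (i : ℕ) = (j : ℕ) + 1 then (1 : ℂ) else 0) +
        (if (j : ℕ) = n - 1 then -((c (n - (i : ℕ)) : ℝ) : ℂ) else 0)) * Q⁻¹).charpoly =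
      X ^ n + ∑ j ∈ Finset.Icc 1 n, C ((c j : ℂ)) * X ^ (n - j) := by
  set Cm : Matrix (Fin n) (Fin n) ℂ := Matrix.of (fun i j : Fin n =>
      (if (i : ℕ) = (j : ℕ) + 1 then (1 : ℂ) else 0) +
      (if (j : ℕ) = n - 1 then -((c (n - (i : ℕ)) : ℝ) : ℂ) else 0)) with hCmdef
  have hC : Cmᴴ = Cmᵀ := by
    ext i j
    simp [hCmdef, Matrix.conjTranspose_apply, Matrix.transpose_apply,
      apply_ite (star : ℂ → ℂ)]
  have key : Qᴴ * Q * Cm = Cmᵀ * (Qᴴ * Q) := by rw [← hHQ]; exact hint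
  have hQQ' : Q * Q⁻¹ = 1 := Matrix.mul_nonsing_inv _ hQ
  have h2 : Cmᵀ * Qᴴ = Qᴴ * (Q * (Cm * Q⁻¹)) := by
    rw [← Matrix.mul_assoc, ← Matrix.mul_assoc, key]
    simp only [Matrix.mul_assoc]
    rw [hQQ', Matrix.mul_one]
  constructor
  · show (Q * Cm * Q⁻¹)ᴴ = Q * Cm * Q⁻¹
    rw [Matrix.conjTranspose_mul, Matrix.conjTranspose_mul, hC, h2,
      ← Matrix.mul_assoc Q⁻¹ᴴ Qᴴ, ← Matrix.conjTranspose_mul, hQQ',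
      Matrix.conjTranspose_one, Matrix.one_mul, Matrix.mul_assoc]
  · exact (charpoly_conj_aux Q Cm hQ).trans (companion_charpoly n c)
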